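/- Define A_k(t) by A_1(t)=1, A_k(t)=1-t/A_{k-1}(t), and f_i(t)=1-A_{i+1}(t)/A_i(t). Fix an integer n>1 and let δ_j = sin²(π/(2n+1))/sin²(π(j+1)/(2n+1)). Then f_i(δ_1) = δ_i for all 1 ≤ i ≤ n-1. -/

import Mathlib

open Real

/-- The continued-fraction recursion `A_1(t) = 1`, `A_k(t) = 1 - t/A_{k-1}(t)`. -/
noncomputable def contA : ℕ → ℝ → ℝ
  | 0, _ => 1
  | 1, _ => 1
  | (k + 2), t => 1 - t / contA (k + 1) t

/-- `f_i(t) = 1 - A_{i+1}(t)/A_i(t)`. -/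
noncomputable def fF (i : ℕ) (t : ℝ) : ℝ := 1 - contA (i + 1) t / contA i t

/-- `δ_j = sin²(π/(2n+1))/sin²(π(j+1)/(2n+1))`. -/
noncomputable def del (n j : ℕ) : ℝ :=
  Real.sin (π / (2 * n + 1)) ^ 2 / Real.sin (π * (j + 1) / (2 * n + 1)) ^ 2

theorem f_at_delta_one (n : ℕ) (hn : 1 < n) (i : ℕ) (hi1 : 1 ≤ i) (hi2 : i ≤ n - 1) :
    fF i (del n 1) = del n i := by
  set θ : ℝ := π / (2 * n + 1) with hθ
  have hN : (0:ℝ) < 2 * n + 1 := by positivity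
  have hθpos : 0 < θ := by positivity
  have hθlt : θ < π / 2 := by
    rw [hθ]
    apply div_lt_div_of_pos_left pi_pos (by norm_num)
    have : (1:ℝ) ≤ n := by exact_mod_cast hn.le
    linarith
  have hcos : 0 < Real.cos θ := Real.cos_pos_of_mem_Ioo ⟨by linarith [pi_pos], hθlt⟩
  have hsin : ∀ k : ℕ, 1 ≤ k → k ≤ 2 * n → 0 < Real.sin ((k:ℝ) * θ) := by
    intro k hk1 hk2
    apply Real.sin_pos_of_pos_of_lt_pi
    · have : (1:ℝ) ≤ k := by exact_mod_cast hk1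
      nlinarith
    · have hk : (k:ℝ) < 2 * n + 1 := by exact_mod_cast Nat.lt_succ_of_le hk2
      rw [hθ, mul_div_assoc']
      rw [div_lt_iff₀ hN]
      nlinarith [pi_pos]
  have hrec : ∀ x : ℝ, Real.sin (x + θ) = 2 * Real.sin x * Real.cos θ - Real.sin (x - θ) := by
    intro x; rw [Real.sin_add, Real.sin_sub]; ring
  have hprod : ∀ x : ℝ,
      Real.sin (x + θ) * Real.sin (x - θ) = Real.sin x ^ 2 - Real.sin θ ^ 2 := by
    intro x
    rw [Real.sin_add, Real.sin_sub]
    linear_combination (Real.sin x ^ 2) * (Real.sin_sq_add_cos_sq θ)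
      - (Real.sin θ ^ 2) * (Real.sin_sq_add_cos_sq x)
  have hsθ : 0 < Real.sin θ := by
    have := hsin 1 le_rfl (by omega); simpa using this
  have del1 : del n 1 = 1 / (4 * Real.cos θ ^ 2) := by
    have h2 : π * (1 + 1) / (2 * (n:ℝ) + 1) = 2 * θ := by rw [hθ]; ring
    rw [del]
    push_cast
    rw [h2, Real.sin_two_mul]
    field_simp
    ring
  have key : ∀ k : ℕ, 1 ≤ k → k ≤ n →
      contA k (del n 1) = Real.sin (((k:ℝ) + 1) * θ) / (2 * Real.cos θ * Real.sin ((k:ℝ) * θ)) := by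
    intro k hk
    induction k, hk using Nat.le_induction with
    | base =>
      intro _
      have h2 : ((1:ℝ) + 1) * θ = 2 * θ := by ring
      rw [show contA 1 (del n 1) = 1 from rfl]
      push_cast
      rw [h2, Real.sin_two_mul]
      have : Real.sin (1 * θ) = Real.sin θ := by norm_num
      rw [this]
      field_simp
    | succ m hm ih =>
      intro hmn
      obtain ⟨p, rfl⟩ : ∃ p, m = p + 1 := ⟨m - 1, by omega⟩
      have hstep : contA (p + 1 + 1) (del n 1) = 1 - del n 1 / contA (p + 1) (del n 1) := rfl
      rw [hstep, ih (by omega)]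
      have hs1 : 0 < Real.sin (((p:ℝ) + 1) * θ) := by
        have := hsin (p + 1) (by omega) (by omega); push_cast at this; exact this
      have hs2 : 0 < Real.sin (((p:ℝ) + 2) * θ) := by
        have := hsin (p + 2) (by omega) (by omega); push_cast at this; exact this
      have hI : Real.sin (((p:ℝ) + 3) * θ) =
          2 * Real.sin (((p:ℝ) + 2) * θ) * Real.cos θ - Real.sin (((p:ℝ) + 1) * θ) := by
        have := hrec (((p:ℝ) + 2) * θ)
        rw [show ((p:ℝ) + 2) * θ + θ = ((p:ℝ) + 3) * θ by ring,
            show ((p:ℝ) + 2) * θ - θ = ((p:ℝ) + 1) * θ by ring] at this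
        linarith
      rw [del1]
      push_cast
      rw [show ((p:ℝ) + 1 + 1) * θ = ((p:ℝ) + 2) * θ by ring,
          show ((p:ℝ) + 1 + 1 + 1) * θ = ((p:ℝ) + 3) * θ by ring]
      generalize Real.sin (((p:ℝ) + 1) * θ) = a at *
      generalize Real.sin (((p:ℝ) + 2) * θ) = b at *
      generalize Real.sin (((p:ℝ) + 3) * θ) = c at *
      field_simp
      linear_combination (-4) * hI
  -- final computation
  have hin : i + 1 ≤ n := by omega
  have k1 := key i hi1 (by omega)
  have k2 := key (i + 1) (by omega) hin
  rw [fF, k1, k2]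
  have hsi : 0 < Real.sin ((i:ℝ) * θ) := hsin i hi1 (by omega)
  have hsi1 : 0 < Real.sin (((i:ℝ) + 1) * θ) := by
    have := hsin (i + 1) (by omega) (by omega); push_cast at this; exact this
  have hP : Real.sin (((i:ℝ) + 2) * θ) * Real.sin ((i:ℝ) * θ)
      = Real.sin (((i:ℝ) + 1) * θ) ^ 2 - Real.sin θ ^ 2 := by
    have := hprod (((i:ℝ) + 1) * θ)
    rw [show ((i:ℝ) + 1) * θ + θ = ((i:ℝ) + 2) * θ by ring,
        show ((i:ℝ) + 1) * θ - θ = (i:ℝ) * θ by ring] at this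
    linarith
  have hdel : del n i = Real.sin θ ^ 2 / Real.sin (((i:ℝ) + 1) * θ) ^ 2 := by
    rw [del, hθ]
    congr 2
    ring
  rw [hdel]
  push_cast
  rw [show ((i:ℝ) + 1 + 1) * θ = ((i:ℝ) + 2) * θ by ring]
  generalize Real.sin (((i:ℝ) + 1) * θ) = a at *
  generalize Real.sin (((i:ℝ) + 2) * θ) = b at *
  generalize Real.sin ((i:ℝ) * θ) = c at *
  field_simp
  linear_combination (-1) * hP
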